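/- arXiv:2002.09883 — 10 statements merged into one kernel-verified Lean document; each statement's English description precedes it below -/
import Mathlib

section
/- Assume the Coxeter graph Γ is connected. Then every G-invariant subspace V of M with V ≠ M is contained in H. In particular, since H ≠ M (as σ_1 does not fix a_1 when char K = 0), H is the unique largest proper G-invariant subspace of M, and H coincides with the subspace of vectors fixed by all of G. -/
/-- If the Coxeter graph Γ is connected, every proper G-invariant
subspace of M is contained in H; moreover H ≠ M and H is exactly the subspace of
vectors fixed by all of G. -/
theorem stmt_0
    {K : Type*} [Field K] [CharZero K]
    {M : Type*} [AddCommGroup M] [Module K M]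
    {n : ℕ} (hn : 2 ≤ n)
    (a : Module.Basis (Fin n) K M)
    (C : Matrix (Fin n) (Fin n) K)
    (hCdiag : ∀ i, C i i = 2)
    (hCzero : ∀ i j, C i j = 0 ↔ C j i = 0)
    (σ : Fin n → (M ≃ₗ[K] M))
    (hσ : ∀ i k, σ i (a k) = a k - C i k • a i)
    (G : Subgroup (M ≃ₗ[K] M))
    (hG : G = Subgroup.closure (Set.range σ))
    (H : Submodule K M)
    (hH : H = ⨅ i, LinearMap.ker ((σ i).toLinearMap - LinearMap.id))
    (hconn : (SimpleGraph.fromRel (fun i j : Fin n => C i j ≠ 0)).Connected) :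
    (∀ V : Submodule K M, (∀ g ∈ G, ∀ v ∈ V, g v ∈ V) → V ≠ ⊤ → V ≤ H) ∧
    H ≠ ⊤ ∧
    (∀ v : M, v ∈ H ↔ ∀ g ∈ G, g v = v) := by
  classical
  -- the linear functionals
  set F : Fin n → (M →ₗ[K] K) := fun i => a.constr K (fun k => C i k) with hFdef
  have hF : ∀ i k, F i (a k) = C i k := by
    intro i k; simp [hFdef, Module.Basis.constr_basis]
  have key : ∀ i, (σ i).toLinearMap =
      LinearMap.id - (LinearMap.toSpanSingleton K M (a i)) ∘ₗ (F i) := by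
    intro i
    apply a.ext
    intro k
    simp [hσ, hF, LinearMap.toSpanSingleton_apply]
  have hσv : ∀ i v, σ i v = v - F i v • a i := by
    intro i v
    have := LinearMap.congr_fun (key i) v
    simpa [LinearMap.toSpanSingleton_apply] using this
  have hσG : ∀ j, (σ j : M ≃ₗ[K] M) ∈ G := fun j =>
    hG ▸ Subgroup.subset_closure ⟨j, rfl⟩
  have hHmem : ∀ v, v ∈ H ↔ ∀ i, σ i v = v := by
    intro v
    rw [hH]
    simp [Submodule.mem_iInf, LinearMap.mem_ker, sub_eq_zero]
  have hFmem : ∀ v, v ∈ H ↔ ∀ i, F i v = 0 := by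
    intro v
    rw [hHmem]
    refine forall_congr' fun i => ?_
    rw [hσv i v, sub_eq_self, smul_eq_zero]
    have : a i ≠ 0 := a.ne_zero i
    tauto
  -- propagation along the graph
  have hstep : ∀ (V : Submodule K M), (∀ g ∈ G, ∀ v ∈ V, g v ∈ V) →
      ∀ i, a i ∈ V → V = ⊤ := by
    intro V hinv i hi
    have hwalk : ∀ {x y : Fin n},
        (SimpleGraph.fromRel fun i j : Fin n => C i j ≠ 0).Walk x y →
        a x ∈ V → a y ∈ V := by
      intro x y w
      induction w with
      | nil => exact id
      | cons h p ih =>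
        rename_i s t r
        intro hx
        apply ih
        rw [SimpleGraph.fromRel_adj] at h
        obtain ⟨hne, hor⟩ := h
        have hCts : C t s ≠ 0 := by
          rcases hor with h' | h'
          · exact fun h0 => h' ((hCzero t s).mp h0)
          · exact h'
        have h1 : (σ t) (a s) ∈ V := hinv _ (hσG t) _ hx
        rw [hσ] at h1
        have h2 : C t s • a t ∈ V := by
          have := V.sub_mem hx h1
          simpa using this
        have h3 := V.smul_mem (C t s)⁻¹ h2
        rwa [smul_smul, inv_mul_cancel₀ hCts, one_smul] at h3
    have hall : ∀ k, a k ∈ V := by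
      intro k
      obtain ⟨w⟩ := hconn.preconnected i k
      exact hwalk w hi
    rw [eq_top_iff, ← a.span_eq]
    rw [Submodule.span_le]
    rintro _ ⟨k, rfl⟩
    exact hall k
  refine ⟨?_, ?_, ?_⟩
  · -- proper invariant subspaces are in H
    intro V hinv hVne v hv
    rw [hFmem]
    intro i
    by_contra hne
    apply hVne
    apply hstep V hinv i
    have h1 : (σ i) v ∈ V := hinv _ (hσG i) _ hv
    rw [hσv] at h1
    have h2 : F i v • a i ∈ V := by
      have := V.sub_mem hv h1
      simpa using this
    have h3 := V.smul_mem (F i v)⁻¹ h2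
    rwa [smul_smul, inv_mul_cancel₀ hne, one_smul] at h3
  · -- H ≠ ⊤
    intro htop
    have i0 : Fin n := ⟨0, by omega⟩
    have : a i0 ∈ H := htop ▸ Submodule.mem_top
    rw [hFmem] at this
    have h2 := this i0
    rw [hF, hCdiag] at h2
    exact two_ne_zero h2
  · -- H is the fixed subspace of G
    intro v
    rw [hHmem]
    constructor
    · intro hfix g hg
      rw [hG] at hg
      induction hg using Subgroup.closure_induction with
      | mem x hx => obtain ⟨i, rfl⟩ := hx; exact hfix i
      | one => rfl
      | mul x y hx hy ihx ihy => show x (y v) = v; rw [ihy, ihx]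
      | inv x hx ihx =>
          show x.symm v = v
          conv_lhs => rw [← ihx]
          exact x.symm_apply_apply v
    · intro hfix i
      exact hfix (σ i) (hσG i)
end

section
/- Assume the Coxeter graph Γ is connected. Then the quotient space M' := M/H, with the induced action of G, is a simple (irreducible) G-module: M' ≠ 0 and the only G-invariant subspaces of M' are 0 and M'. -/
/-- If the Coxeter graph Γ is connected, then M' = M/H with the
induced G-action is a simple G-module: M' ≠ 0 and the only G-invariant
subspaces of M' are 0 and M'. -/
theorem stmt_1
    {K : Type*} [Field K] [CharZero K]
    {M : Type*} [AddCommGroup M] [Module K M]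
    {n : ℕ} (hn : 2 ≤ n)
    (a : Module.Basis (Fin n) K M)
    (C : Matrix (Fin n) (Fin n) K)
    (hCdiag : ∀ i, C i i = 2)
    (hCzero : ∀ i j, C i j = 0 ↔ C j i = 0)
    (σ : Fin n → (M ≃ₗ[K] M))
    (hσ : ∀ i k, σ i (a k) = a k - C i k • a i)
    (G : Subgroup (M ≃ₗ[K] M))
    (hG : G = Subgroup.closure (Set.range σ))
    (H : Submodule K M)
    (hH : H = ⨅ i, LinearMap.ker ((σ i).toLinearMap - LinearMap.id))
    (hconn : (SimpleGraph.fromRel (fun i j : Fin n => C i j ≠ 0)).Connected) :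
    (⊥ : Submodule K (M ⧸ H)) ≠ ⊤ ∧
    (∀ V' : Submodule K (M ⧸ H),
      (∀ g ∈ G, ∀ v : M, H.mkQ v ∈ V' → H.mkQ (g v) ∈ V') →
      V' = ⊥ ∨ V' = ⊤) := by
  classical
  -- the linear functionals φ i with φ i (a k) = C i k
  set φ : Fin n → (M →ₗ[K] K) := fun i => Module.Basis.constr a K (fun k => C i k) with hφdef
  have hφa : ∀ i k, φ i (a k) = C i k := fun i k => Module.Basis.constr_basis a K _ k
  have hσx : ∀ i (x : M), σ i x = x - φ i x • a i := by
    intro i x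
    have h1 : ((σ i).toLinearMap)
        = LinearMap.id - (LinearMap.toSpanSingleton K M (a i)).comp (φ i) := by
      apply Module.Basis.ext a
      intro k
      simp [hσ i k, hφa, LinearMap.toSpanSingleton_apply]
    have h2 := LinearMap.congr_fun h1 x
    simpa using h2
  have hmemH : ∀ x : M, x ∈ H ↔ ∀ i, φ i x = 0 := by
    intro x
    rw [hH]
    simp only [Submodule.mem_iInf, LinearMap.mem_ker, LinearMap.sub_apply,
      LinearMap.id_apply, LinearEquiv.coe_coe, sub_eq_zero]
    constructor
    · intro h i
      have h1 := h i
      rw [hσx i x] at h1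
      have h2 : φ i x • a i = 0 := by
        have := sub_eq_self.mp h1
        linear_combination (norm := abel) this
      rcases smul_eq_zero.mp h2 with h3 | h3
      · exact h3
      · exact absurd h3 (a.ne_zero i)
    · intro h i
      rw [hσx i x, h i, zero_smul, sub_zero]
  have hσG : ∀ i, σ i ∈ G := by
    intro i
    rw [hG]
    exact Subgroup.subset_closure (Set.mem_range_self i)
  constructor
  · -- ⊥ ≠ ⊤ : a 0 ∉ H
    intro hbt
    have h0 : (⟨0, by omega⟩ : Fin n) = ⟨0, by omega⟩ := rfl
    set i0 : Fin n := ⟨0, by omega⟩ with hi0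
    have ha0 : a i0 ∉ H := by
      intro hmem
      have h1 := (hmemH _).mp hmem i0
      rw [hφa, hCdiag] at h1
      exact two_ne_zero h1
    have h2 : H.mkQ (a i0) ∈ (⊤ : Submodule K (M ⧸ H)) := trivial
    rw [← hbt] at h2
    have h3 : H.mkQ (a i0) = 0 := h2
    rw [Submodule.mkQ_apply, Submodule.Quotient.mk_eq_zero] at h3
    exact ha0 h3
  · intro V' hV'
    by_cases hbot : V' = ⊥
    · exact Or.inl hbot
    right
    obtain ⟨w, hwV, hw0⟩ := Submodule.ne_bot_iff V' |>.mp hbot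
    obtain ⟨v, rfl⟩ := Submodule.mkQ_surjective H w
    have hvH : v ∉ H := by
      intro hmem
      apply hw0
      rw [Submodule.mkQ_apply, Submodule.Quotient.mk_eq_zero]
      exact hmem
    obtain ⟨i0, hi0⟩ : ∃ i, φ i v ≠ 0 := by
      by_contra hc
      push_neg at hc
      exact hvH ((hmemH v).mpr hc)
    -- mkQ (a i0) ∈ V'
    have hai0 : H.mkQ (a i0) ∈ V' := by
      have h1 : H.mkQ (σ i0 v) ∈ V' := hV' (σ i0) (hσG i0) v hwV
      rw [hσx i0 v] at h1
      have h2 : H.mkQ v - H.mkQ (v - φ i0 v • a i0) ∈ V' := V'.sub_mem hwV h1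
      have h3 : H.mkQ v - H.mkQ (v - φ i0 v • a i0) = φ i0 v • H.mkQ (a i0) := by
        rw [map_sub, map_smul]
        abel
      rw [h3] at h2
      exact (Submodule.smul_mem_iff V' hi0).mp h2
    -- propagation along edges
    have hstep : ∀ i : Fin n, H.mkQ (a i) ∈ V' → ∀ j, C j i ≠ 0 → H.mkQ (a j) ∈ V' := by
      intro i hi j hji
      have h1 : H.mkQ (σ j (a i)) ∈ V' := hV' (σ j) (hσG j) (a i) hi
      rw [hσ j i] at h1
      have h2 : H.mkQ (a i) - H.mkQ (a i - C j i • a j) ∈ V' := V'.sub_mem hi h1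
      have h3 : H.mkQ (a i) - H.mkQ (a i - C j i • a j) = C j i • H.mkQ (a j) := by
        rw [map_sub, map_smul]
        abel
      rw [h3] at h2
      exact (Submodule.smul_mem_iff V' hji).mp h2
    -- along walks
    have hwalk : ∀ u v' : Fin n,
        (SimpleGraph.fromRel (fun i j : Fin n => C i j ≠ 0)).Walk u v' →
        H.mkQ (a u) ∈ V' → H.mkQ (a v') ∈ V' := by
      intro u v' p
      induction p with
      | nil => exact id
      | @cons x y z h p ih =>
        intro hx
        apply ih
        rw [SimpleGraph.fromRel_adj] at h
        obtain ⟨hne, hc⟩ := h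
        have hyx : C y x ≠ 0 := by
          rcases hc with h | h
          · intro h0; exact h ((hCzero x y).mpr h0)
          · exact h
        exact hstep x hx y hyx
    have hall : ∀ j, H.mkQ (a j) ∈ V' := by
      intro j
      obtain ⟨p⟩ := hconn.preconnected i0 j
      exact hwalk i0 j p hai0
    -- conclude V' = ⊤
    have hspan : Submodule.span K (Set.range fun k => H.mkQ (a k)) = ⊤ := by
      have h1 : Set.range (fun k => H.mkQ (a k)) = H.mkQ '' Set.range a := by
        rw [← Set.range_comp]; rfl
      rw [h1, ← Submodule.map_span, a.span_eq, Submodule.map_top, Submodule.range_mkQ]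
    apply eq_top_iff.mpr
    rw [← hspan]
    apply Submodule.span_le.mpr
    rintro _ ⟨k, rfl⟩
    exact hall k
end

section
/- Assume the Coxeter graph Γ is connected and H ≠ 0. Then the exact sequence 0 → H → M → M/H → 0 of G-modules does not split: there is no G-invariant subspace W of M with M = H ⊕ W. -/
/-- If the Coxeter graph Γ is connected and H ≠ 0, the exact
sequence 0 → H → M → M/H → 0 of G-modules does not split: no G-invariant
subspace W of M satisfies M = H ⊕ W. -/
theorem stmt_2
    {K : Type*} [Field K] [CharZero K]
    {M : Type*} [AddCommGroup M] [Module K M]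
    {n : ℕ} (hn : 2 ≤ n)
    (a : Module.Basis (Fin n) K M)
    (C : Matrix (Fin n) (Fin n) K)
    (hCdiag : ∀ i, C i i = 2)
    (hCzero : ∀ i j, C i j = 0 ↔ C j i = 0)
    (σ : Fin n → (M ≃ₗ[K] M))
    (hσ : ∀ i k, σ i (a k) = a k - C i k • a i)
    (G : Subgroup (M ≃ₗ[K] M))
    (hG : G = Subgroup.closure (Set.range σ))
    (H : Submodule K M)
    (hH : H = ⨅ i, LinearMap.ker ((σ i).toLinearMap - LinearMap.id))
    (hconn : (SimpleGraph.fromRel (fun i j : Fin n => C i j ≠ 0)).Connected)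
    (hHne : H ≠ ⊥) :
    ¬ ∃ W : Submodule K M, (∀ g ∈ G, ∀ v ∈ W, g v ∈ W) ∧ IsCompl H W := by
  rintro ⟨W, hWinv, hcompl⟩
  have hσG : ∀ i, σ i ∈ G := by
    intro i
    rw [hG]
    exact Subgroup.subset_closure ⟨i, rfl⟩
  -- every basis vector lies in W
  have key : ∀ i, a i ∈ W := by
    intro i
    have htop : H ⊔ W = ⊤ := hcompl.sup_eq_top
    have hmem : a i ∈ H ⊔ W := htop ▸ Submodule.mem_top
    obtain ⟨h, hhH, w, hwW, hsum⟩ := Submodule.mem_sup.mp hmem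
    -- h is fixed by σ i
    have hfix : σ i h = h := by
      have := (Submodule.mem_iInf _).mp (hH ▸ hhH) i
      have := LinearMap.mem_ker.mp this
      have h2 : (σ i).toLinearMap h - h = 0 := by
        simpa [LinearMap.sub_apply] using this
      have := sub_eq_zero.mp h2
      simpa using this
    have hσw : σ i w ∈ W := hWinv _ (hσG i) w hwW
    -- σ i (a i) = - a i
    have hneg : σ i (a i) = -(a i) := by
      rw [hσ i i, hCdiag i]
      module
    -- compute: h + σ i w = -(h + w)
    have heq : h + σ i w = -(h + w) := by
      have e : σ i (h + w) = -(h + w) := by rw [hsum, hneg]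
      rw [map_add, hfix] at e
      exact e
    have e2 : (h + h) + (σ i w + w) = 0 := by
      rw [show (h + h) + (σ i w + w) = (h + σ i w) + (h + w) by abel, heq]
      abel
    have h2h : (2 : K) • h = -(σ i w + w) := by
      rw [two_smul]
      exact eq_neg_of_add_eq_zero_left e2
    have h2hW : (2 : K) • h ∈ W := by
      rw [h2h]
      exact neg_mem (add_mem hσw hwW)
    have h2hH : (2 : K) • h ∈ H := Submodule.smul_mem _ _ hhH
    have hzero : (2 : K) • h = 0 :=
      (Submodule.disjoint_def.mp hcompl.disjoint) _ h2hH h2hW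
    have hh0 : h = 0 := by
      rcases smul_eq_zero.mp hzero with h2 | h0
      · exact absurd h2 two_ne_zero
      · exact h0
    rw [← hsum, hh0, zero_add]
    exact hwW
  have hWtop : W = ⊤ := by
    rw [eq_top_iff, ← a.span_eq, Submodule.span_le]
    rintro _ ⟨i, rfl⟩
    exact key i
  have : H = ⊥ := by
    have := hcompl.disjoint
    rw [hWtop, disjoint_top] at this
    exact this
  exact hHne this
end

section
/- The fixed subspace H is zero if and only if det C ≠ 0. Consequently, if the Coxeter graph Γ is connected, then G acts irreducibly on M (i.e., the only G-invariant subspaces of M are 0 and M) if and only if det C ≠ 0. -/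
/-- H = 0 iff det C ≠ 0; consequently, if the Coxeter graph Γ is
connected, G acts irreducibly on M iff det C ≠ 0. -/
theorem stmt_3
    {K : Type*} [Field K] [CharZero K]
    {M : Type*} [AddCommGroup M] [Module K M]
    {n : ℕ} (hn : 2 ≤ n)
    (a : Module.Basis (Fin n) K M)
    (C : Matrix (Fin n) (Fin n) K)
    (hCdiag : ∀ i, C i i = 2)
    (hCzero : ∀ i j, C i j = 0 ↔ C j i = 0)
    (σ : Fin n → (M ≃ₗ[K] M))
    (hσ : ∀ i k, σ i (a k) = a k - C i k • a i)
    (G : Subgroup (M ≃ₗ[K] M))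
    (hG : G = Subgroup.closure (Set.range σ))
    (H : Submodule K M)
    (hH : H = ⨅ i, LinearMap.ker ((σ i).toLinearMap - LinearMap.id)) :
    (H = ⊥ ↔ C.det ≠ 0) ∧
    ((SimpleGraph.fromRel (fun i j : Fin n => C i j ≠ 0)).Connected →
      ((∀ V : Submodule K M, (∀ g ∈ G, ∀ v ∈ V, g v ∈ V) → V = ⊥ ∨ V = ⊤) ↔
        C.det ≠ 0)) := by
  classical
  set φ : Fin n → (M →ₗ[K] K) := fun i => ∑ k, C i k • (a.coord k) with hφdef
  have hφ : ∀ i v, φ i v = ∑ k, C i k * a.repr v k := by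
    intro i v
    simp [hφdef, Module.Basis.coord_apply]
  have hφa : ∀ i k, φ i (a k) = C i k := by
    intro i k
    rw [hφ]
    rw [Finset.sum_eq_single k]
    · simp
    · intro j _ hj
      simp [Module.Basis.repr_self, Finsupp.single_apply, Ne.symm hj]
    · simp
  have hσv : ∀ i v, σ i v = v - φ i v • a i := by
    intro i v
    have heq : (σ i).toLinearMap = LinearMap.id - (φ i).smulRight (a i) := by
      apply a.ext; intro k
      simp [hσ, hφa]
    have h2 := LinearMap.congr_fun heq v
    simpa using h2
  have hHmem : ∀ v, v ∈ H ↔ ∀ i, φ i v = 0 := by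
    intro v
    simp only [hH, Submodule.mem_iInf, LinearMap.mem_ker, LinearMap.sub_apply,
      LinearMap.id_apply, sub_eq_zero]
    constructor
    · intro h i
      have h1 : (σ i).toLinearMap v = σ i v := rfl
      have h2 := h i
      rw [h1, hσv i v] at h2
      have h3 : φ i v • a i = 0 := by
        have := sub_eq_self.mp h2
        simpa using this
      rcases smul_eq_zero.mp h3 with h4 | h4
      · exact h4
      · exact absurd h4 (a.ne_zero i)
    · intro h i
      have h1 : (σ i).toLinearMap v = σ i v := rfl
      rw [h1, hσv i v, h i]
      simp
  have hmulVec : ∀ v i, C.mulVec (fun k => a.repr v k) i = φ i v := by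
    intro v i
    rw [hφ]
    simp [Matrix.mulVec, dotProduct]
  have part1 : H = ⊥ ↔ C.det ≠ 0 := by
    constructor
    · intro hbot hdet0
      obtain ⟨x, hx0, hx⟩ := (Matrix.exists_mulVec_eq_zero_iff).2 hdet0
      set v : M := ∑ k, x k • a k with hvdef
      have hrepr : ∀ k, a.repr v k = x k := by
        intro k
        rw [hvdef]
        simp only [map_sum, map_smul, Module.Basis.repr_self]
        rw [Finsupp.finset_sum_apply]
        rw [Finset.sum_eq_single k]
        · simp
        · intro j _ hj; simp [Finsupp.single_apply, hj]
        · simp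
      have hvH : v ∈ H := by
        rw [hHmem]
        intro i
        rw [← hmulVec]
        have : (fun k => a.repr v k) = x := funext hrepr
        rw [this, hx]
        rfl
      rw [hbot] at hvH
      have hv0 : v = 0 := hvH
      apply hx0
      funext k
      rw [← hrepr k, hv0]
      simp
    · intro hdet
      rw [eq_bot_iff]
      intro v hv
      have hmv : C.mulVec (fun k => a.repr v k) = 0 := by
        funext i
        rw [hmulVec]
        exact (hHmem v).1 hv i
      have hx0 : (fun k => a.repr v k) = 0 := by
        by_contra hne
        exact hdet (Matrix.exists_mulVec_eq_zero_iff.1 ⟨_, hne, hmv⟩)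
      have : a.repr v = 0 := by
        ext k
        exact congrFun hx0 k
      have : v = 0 := by
        have := a.repr.injective (by simpa using this)
        simpa using this
      simp [this]
  have hσG : ∀ i, σ i ∈ G := by
    intro i
    rw [hG]
    exact Subgroup.subset_closure ⟨i, rfl⟩
  refine ⟨part1, fun hconn => ⟨?_, ?_⟩⟩
  · intro hirr hdet
    have hHinv : ∀ g ∈ G, ∀ v ∈ H, g v ∈ H := by
      have hfix : ∀ g ∈ G, ∀ v ∈ H, g v = v := by
        intro g hg
        rw [hG] at hg
        induction hg using Subgroup.closure_induction with
        | mem x hx =>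
          obtain ⟨i, rfl⟩ := hx
          intro v hv
          have := (hHmem v).1 hv i
          rw [hσv, this]
          simp
        | one => intro v _; rfl
        | mul x y _ _ hx hy =>
          intro v hv
          have : (x * y) v = x (y v) := rfl
          rw [this, hy v hv, hx v hv]
        | inv x _ hx =>
          intro v hv
          have h1 : x v = v := hx v hv
          have h2 : x⁻¹ (x v) = v := by
            show (x⁻¹ * x) v = v
            simp
          rw [h1] at h2
          exact h2
      intro g hg v hv
      rw [hfix g hg v hv]
      exact hv
    rcases hirr H hHinv with hb | ht
    · exact (part1.1 hb) hdet
    · have i0 : Fin n := ⟨0, by omega⟩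
      have hmem : a i0 ∈ H := ht ▸ Submodule.mem_top
      have := (hHmem (a i0)).1 hmem i0
      rw [hφa, hCdiag] at this
      exact two_ne_zero this
  · intro hdet
    intro V hV
    by_cases hA : ∃ i, a i ∈ V
    · right
      obtain ⟨i0, hi0⟩ := hA
      have hstep : ∀ j k : Fin n,
          (SimpleGraph.fromRel (fun i j : Fin n => C i j ≠ 0)).Adj j k →
          a j ∈ V → a k ∈ V := by
        intro j k hadj hj
        rw [SimpleGraph.fromRel_adj] at hadj
        obtain ⟨hne, hc⟩ := hadj
        have hCkj : C k j ≠ 0 := by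
          rcases hc with h | h
          · intro h0; exact h ((hCzero j k).2 h0)
          · exact h
        have h1 : σ k (a j) ∈ V := hV _ (hσG k) _ hj
        have h2 : a j - σ k (a j) ∈ V := Submodule.sub_mem V hj h1
        rw [hσv, hφa] at h2
        have h3 : C k j • a k ∈ V := by simpa using h2
        have h4 : (C k j)⁻¹ • (C k j • a k) ∈ V := Submodule.smul_mem V _ h3
        rwa [smul_smul, inv_mul_cancel₀ hCkj, one_smul] at h4
      have hW : ∀ {u v : Fin n},
          (SimpleGraph.fromRel (fun i j : Fin n => C i j ≠ 0)).Walk u v →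
          a u ∈ V → a v ∈ V := by
        intro u v w
        induction w with
        | nil => exact id
        | cons h p ih => exact fun hu => ih (hstep _ _ h hu)
      have hall : ∀ j, a j ∈ V := by
        intro j
        obtain ⟨w⟩ := hconn i0 j
        exact hW w hi0
      rw [eq_top_iff, ← a.span_eq]
      rw [Submodule.span_le]
      rintro x ⟨j, rfl⟩
      exact hall j
    · left
      push_neg at hA
      have key : ∀ v ∈ V, ∀ i, φ i v = 0 := by
        intro v hv i
        by_contra hne
        have h1 : σ i v ∈ V := hV _ (hσG i) _ hv
        have h2 : v - σ i v ∈ V := Submodule.sub_mem V hv h1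
        rw [hσv] at h2
        have h3 : φ i v • a i ∈ V := by simpa using h2
        have h4 : (φ i v)⁻¹ • (φ i v • a i) ∈ V := Submodule.smul_mem V _ h3
        rw [smul_smul, inv_mul_cancel₀ hne, one_smul] at h4
        exact hA i h4
      have hle : V ≤ H := fun v hv => (hHmem v).2 (key v hv)
      rw [part1.2 hdet] at hle
      exact le_bot_iff.mp hle
end

section
/- Assume the Coxeter graph Γ is connected. Then N(G) is a normal subgroup of G, and the quotient map π : G → G/N(G) preserves the orders of the products of two generators: for all i, j, if σ_i σ_j has finite order m, then π(σ_i σ_j) also has order m in G/N(G). -/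
/-- If the Coxeter graph Γ is connected, N(G) is a normal subgroup
of G and the projection π : G → G/N(G) preserves the (finite) orders of products
of two generators σ_i σ_j. -/
theorem stmt_4
    {K : Type*} [Field K] [CharZero K]
    {M : Type*} [AddCommGroup M] [Module K M]
    {n : ℕ} (hn : 2 ≤ n)
    (a : Module.Basis (Fin n) K M)
    (C : Matrix (Fin n) (Fin n) K)
    (hCdiag : ∀ i, C i i = 2)
    (hCzero : ∀ i j, C i j = 0 ↔ C j i = 0)
    (σ : Fin n → (M ≃ₗ[K] M))
    (hσ : ∀ i k, σ i (a k) = a k - C i k • a i)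
    (G : Subgroup (M ≃ₗ[K] M))
    (hG : G = Subgroup.closure (Set.range σ))
    (H : Submodule K M)
    (hH : H = ⨅ i, LinearMap.ker ((σ i).toLinearMap - LinearMap.id))
    (hconn : (SimpleGraph.fromRel (fun i j : Fin n => C i j ≠ 0)).Connected)
    (N : Subgroup G)
    (hN : ∀ g : G, g ∈ N ↔ ∀ v : M, (g : M ≃ₗ[K] M) v - v ∈ H) :
    N.Normal ∧
    (∀ [inst : N.Normal], ∀ i j : Fin n, ∀ x : G,
      (x : M ≃ₗ[K] M) = σ i * σ j →
      ∀ m : ℕ, 0 < m → orderOf x = m →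
      orderOf (QuotientGroup.mk x : G ⧸ N) = m) := by
  classical
  -- the linear functionals φ i
  set φ : Fin n → (M →ₗ[K] K) := fun i => ∑ l, C i l • a.coord l with hφdef
  have hφa : ∀ i k, φ i (a k) = C i k := by
    intro i k
    simp [hφdef, Module.Basis.coord_apply, Finsupp.single_apply]
  -- σ i v = v - φ i v • a i
  have hσlin : ∀ i, (σ i).toLinearMap = LinearMap.id - (φ i).smulRight (a i) := by
    intro i
    apply a.ext
    intro k
    simp [hσ, hφa]
  have hσv : ∀ i v, σ i v = v - φ i v • a i := by
    intro i v
    have := LinearMap.congr_fun (hσlin i) v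
    simpa using this
  -- membership in H
  have hHmem : ∀ v, v ∈ H ↔ ∀ i, φ i v = 0 := by
    intro v
    rw [hH]
    simp only [Submodule.mem_iInf, LinearMap.mem_ker, LinearMap.sub_apply,
      LinearEquiv.coe_coe, LinearMap.id_apply, sub_eq_zero]
    constructor
    · intro h i
      have h1 : v - φ i v • a i = v := by rw [← hσv i v]; exact h i
      have h2 : φ i v • a i = 0 := by
        have := sub_eq_self.mp h1
        exact this
      rcases smul_eq_zero.mp h2 with h3 | h3
      · exact h3
      · exact absurd h3 (a.ne_zero i)
    · intro h i
      rw [hσv i v, h i, zero_smul, sub_zero]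
  -- every element of G fixes H pointwise
  have hGfix : ∀ g : M ≃ₗ[K] M, g ∈ G → ∀ v ∈ H, g v = v := by
    intro g hg
    rw [hG] at hg
    induction hg using Subgroup.closure_induction with
    | mem g hg =>
      rcases hg with ⟨i, rfl⟩
      intro v hv
      rw [hσv i v, (hHmem v).mp hv i, zero_smul, sub_zero]
    | one => intro v hv; rfl
    | mul g₁ g₂ _ _ ih₁ ih₂ =>
      intro v hv
      show g₁ (g₂ v) = v
      rw [ih₂ v hv, ih₁ v hv]
    | inv g _ ih =>
      intro v hv
      have := ih v hv
      calc g⁻¹ v = g⁻¹ (g v) := by rw [this]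
        _ = (g⁻¹ * g) v := rfl
        _ = v := by rw [inv_mul_cancel]; rfl
  -- N is normal
  have hnormal : N.Normal := by
    constructor
    intro g hg h
    rw [hN] at hg ⊢
    intro v
    have hgcoe : ((h * g * h⁻¹ : G) : M ≃ₗ[K] M) =
        (h : M ≃ₗ[K] M) * (g : M ≃ₗ[K] M) * ((h : M ≃ₗ[K] M))⁻¹ := rfl
    set w := ((h : M ≃ₗ[K] M))⁻¹ v with hw
    have hu : (g : M ≃ₗ[K] M) w - w ∈ H := hg w
    have hfix : (h : M ≃ₗ[K] M) ((g : M ≃ₗ[K] M) w - w) = (g : M ≃ₗ[K] M) w - w :=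
      hGfix _ h.2 _ hu
    have : ((h * g * h⁻¹ : G) : M ≃ₗ[K] M) v - v = (g : M ≃ₗ[K] M) w - w := by
      rw [hgcoe]
      show (h : M ≃ₗ[K] M) ((g : M ≃ₗ[K] M) w) - v = _
      have hv : (h : M ≃ₗ[K] M) w = v := by
        show ((h : M ≃ₗ[K] M) * ((h : M ≃ₗ[K] M))⁻¹) v = v
        rw [mul_inv_cancel]
        rfl
      calc (h : M ≃ₗ[K] M) ((g : M ≃ₗ[K] M) w) - v
          = (h : M ≃ₗ[K] M) (((g : M ≃ₗ[K] M) w - w) + w) - v := by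
            rw [show ((g : M ≃ₗ[K] M) w - w) + w = (g : M ≃ₗ[K] M) w from by abel]
        _ = (h : M ≃ₗ[K] M) ((g : M ≃ₗ[K] M) w - w) + (h : M ≃ₗ[K] M) w - v := by
            rw [map_add]
        _ = (g : M ≃ₗ[K] M) w - w := by rw [hfix, hv]; abel
    rw [this]
    exact hu
  refine ⟨hnormal, ?_⟩
  intro _ i j x hx m hm horder
  set e : M ≃ₗ[K] M := (x : M ≃ₗ[K] M) with he
  -- main claim: x^k ∈ N → x^k = 1
  have key : ∀ k : ℕ, x ^ k ∈ N → x ^ k = 1 := by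
    intro k hk
    rw [hN] at hk
    have hcoe : ((x ^ k : G) : M ≃ₗ[K] M) = e ^ k := by push_cast; rfl
    by_cases hij : i = j
    · -- then e = σ i * σ i = 1
      have hone : e = 1 := by
        rw [hx, ← hij]
        apply LinearEquiv.toLinearMap_injective
        apply a.ext
        intro k'
        show (σ i) ((σ i) (a k')) = a k'
        rw [hσ i k', map_sub, map_smul, hσ i k', hσ i i, hCdiag i]
        module
      apply Subtype.ext
      show ((x ^ k : G) : M ≃ₗ[K] M) = 1
      rw [hcoe, hone, one_pow]
    · -- i ≠ j : the plane P
      set P : Submodule K M := Submodule.span K {a i, a j} with hP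
      have hstep : ∀ v, e v - v ∈ P := by
        intro v
        rw [hx]
        show σ i (σ j v) - v ∈ P
        rw [hσv i (σ j v), hσv j v]
        have heq : v - φ j v • a j - φ i (v - φ j v • a j) • a i - v
            = (-(φ i (v - φ j v • a j))) • a i + (-(φ j v)) • a j := by module
        rw [heq]
        exact Submodule.add_mem _
          (Submodule.smul_mem _ _ (Submodule.subset_span (by simp)))
          (Submodule.smul_mem _ _ (Submodule.subset_span (by simp)))
      have hpow : ∀ k' : ℕ, ∀ v, (e ^ k') v - v ∈ P := by
        intro k'
        induction k' with
        | zero => intro v; simp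
        | succ k' ih =>
          intro v
          have h1 : (e ^ (k' + 1)) v = (e ^ k') (e v) := by
            rw [pow_succ]; rfl
          rw [h1]
          have : (e ^ k') (e v) - v = ((e ^ k') (e v) - e v) + (e v - v) := by abel
          rw [this]
          exact Submodule.add_mem _ (ih (e v)) (hstep v)
      -- finite order forces C i j * C j i ≠ 4
      have hc : C i j * C j i ≠ 4 := by
        intro hc4
        -- explicit formula for e^k (a i)
        have heai : e (a i) = (C i j * C j i - 1) • a i - C j i • a j := by
          rw [hx]
          show σ i (σ j (a i)) = _
          rw [hσ j i, map_sub, map_smul, hσ i i, hσ i j, hCdiag i]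
          module
        have heaj : e (a j) = C i j • a i - a j := by
          rw [hx]
          show σ i (σ j (a j)) = _
          rw [hσ j j, hCdiag j, map_sub, map_smul, hσ i j]
          module
        have hform : ∀ k' : ℕ,
            (e ^ k') (a i) = (1 + 2 * (k' : K)) • a i - ((k' : K) * C j i) • a j := by
          intro k'
          induction k' with
          | zero => simp
          | succ k' ih =>
            have h1 : (e ^ (k' + 1)) (a i) = e ((e ^ k') (a i)) := by
              rw [pow_succ']; rfl
            rw [h1, ih, map_sub, map_smul, map_smul, heai, heaj]
            push_cast
            match_scalars <;> (try ring) <;> linear_combination ((k' : K) + 1) * hc4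
        -- x^m = 1 since orderOf x = m
        have hxm : x ^ m = 1 := by rw [← horder]; exact pow_orderOf_eq_one x
        have hxmcoe : (e ^ m) (a i) = a i := by
          have : ((x ^ m : G) : M ≃ₗ[K] M) = e ^ m := by push_cast; rfl
          rw [← this, hxm]
          rfl
        have := hform m
        rw [hxmcoe] at this
        have h3 := congrArg (fun v => a.repr v i) this
        simp [Finsupp.single_apply, Ne.symm hij] at h3
        exact absurd h3 hm.ne'
      -- P ∩ H = 0
      have hPH : ∀ v, v ∈ P → v ∈ H → v = 0 := by
        intro v hvP hvH
        rcases Submodule.mem_span_pair.mp hvP with ⟨α, β, hv⟩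
        have h1 : φ i v = 0 := (hHmem v).mp hvH i
        have h2 : φ j v = 0 := (hHmem v).mp hvH j
        rw [← hv] at h1 h2
        simp only [map_add, map_smul, hφa, smul_eq_mul, hCdiag] at h1 h2
        -- h1 : α * 2 + β * C i j = 0, h2 : α * C j i + β * 2 = 0
        have hα : α = 0 := by
          have h4 : (4 - C i j * C j i) * α = 0 := by
            linear_combination 2 * h1 - C i j * h2
          rcases mul_eq_zero.mp h4 with h | h
          · exact absurd (by linear_combination -h : C i j * C j i = 4) hc
          · exact h
        have hβ : β = 0 := by
          rw [hα] at h2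
          linear_combination h2 / 2
        rw [← hv, hα, hβ]
        simp
      -- conclude x^k = 1
      have hek : ∀ v, (e ^ k) v = v := by
        intro v
        have h1 : (e ^ k) v - v ∈ P := hpow k v
        have h2 : (e ^ k) v - v ∈ H := by
          have := hk v
          rw [hcoe] at this
          exact this
        have := hPH _ h1 h2
        exact sub_eq_zero.mp this
      apply Subtype.ext
      show ((x ^ k : G) : M ≃ₗ[K] M) = 1
      rw [hcoe]
      refine LinearEquiv.ext fun v => ?_
      rw [hek v]
      rfl
  -- finish
  have hxm : x ^ m = 1 := by rw [← horder]; exact pow_orderOf_eq_one x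
  have hdvd : orderOf (QuotientGroup.mk x : G ⧸ N) ∣ m := by
    apply orderOf_dvd_of_pow_eq_one
    rw [← QuotientGroup.mk_pow, hxm]
    rfl
  have hd0 : orderOf (QuotientGroup.mk x : G ⧸ N) ≠ 0 := by
    intro h0
    rw [h0] at hdvd
    exact hm.ne' (Nat.eq_zero_of_zero_dvd hdvd)
  have hmem : x ^ orderOf (QuotientGroup.mk x : G ⧸ N) ∈ N := by
    rw [← QuotientGroup.eq_one_iff, QuotientGroup.mk_pow]
    exact pow_orderOf_eq_one _
  have hone := key _ hmem
  have hmdvd : m ∣ orderOf (QuotientGroup.mk x : G ⧸ N) := by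
    rw [← horder]
    exact orderOf_dvd_of_pow_eq_one hone
  exact Nat.dvd_antisymm hdvd hmdvd
end

section
/- Let K be a field and let C be an (n₀+n₁) × (n₀+n₁) matrix over K written in block form C = [[C₀₀, C₀₁],[C₁₀, C₁₁]] with C₀₀ of size n₀ × n₀ and C₁₁ of size n₁ × n₁ invertible. Then the kernel of C has dimension exactly n₀ if and only if C₀₁ C₁₁⁻¹ C₁₀ = C₀₀. -/
open Matrix LinearMap

/-- kernel of an invertible matrix's mulVecLin is trivial -/
lemma aux_ker_invertible {K : Type*} [Field K] {m : Type*} [Fintype m] [DecidableEq m]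
    (U : Matrix m m K) [Invertible U] : LinearMap.ker U.mulVecLin = ⊥ := by
  rw [LinearMap.ker_eq_bot]
  intro x y h
  have h' := congrArg (⅟U).mulVec h
  simpa [Matrix.mulVec_mulVec] using h'

/-- mulVecLin of a block diagonal matrix is conjugate to a prodMap -/
lemma aux_blockdiag {K : Type*} [Field K] {m n : Type*} [Fintype m] [Fintype n]
    [DecidableEq m] [DecidableEq n]
    (S : Matrix m m K) (D : Matrix n n K) :
    (Matrix.fromBlocks S 0 0 D).mulVecLin =
      (LinearEquiv.sumArrowLequivProdArrow m n K K).symm.toLinearMap ∘ₗ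
        (S.mulVecLin.prodMap D.mulVecLin) ∘ₗ
        (LinearEquiv.sumArrowLequivProdArrow m n K K).toLinearMap := by
  ext x i
  cases i <;>
    simp [Matrix.mulVecLin, Matrix.fromBlocks_mulVec, LinearEquiv.sumArrowLequivProdArrow,
      Matrix.mulVec, dotProduct]

lemma aux_prod_bot {K : Type*} [Field K] {A B : Type*} [AddCommGroup A] [AddCommGroup B]
    [Module K A] [Module K B] (p : Submodule K A) :
    p.prod (⊥ : Submodule K B) = Submodule.map (LinearMap.inl K A B) p := by
  ext ⟨a, b⟩
  simp [Submodule.mem_prod, eq_comm, and_comm]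

lemma aux_finrank_ker_blockdiag {K : Type*} [Field K] {m n : Type*} [Fintype m] [Fintype n]
    [DecidableEq m] [DecidableEq n]
    (S : Matrix m m K) (D : Matrix n n K) [Invertible D] :
    Module.finrank K (LinearMap.ker (Matrix.fromBlocks S 0 0 D).mulVecLin) =
      Module.finrank K (LinearMap.ker S.mulVecLin) := by
  rw [aux_blockdiag S D]
  set e := LinearEquiv.sumArrowLequivProdArrow m n K K
  rw [LinearMap.ker_comp, e.symm.ker, Submodule.comap_bot, LinearMap.ker_comp,
    LinearMap.ker_prodMap, aux_ker_invertible D, aux_prod_bot]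
  rw [Submodule.comap_equiv_eq_map_symm e
    (Submodule.map (LinearMap.inl K (m → K) (n → K)) (LinearMap.ker S.mulVecLin)),
    LinearEquiv.finrank_map_eq]
  exact ((LinearMap.ker S.mulVecLin).equivMapOfInjective
    (LinearMap.inl K (m → K) (n → K)) LinearMap.inl_injective).symm.finrank_eq

/-- For a block matrix C = [[C₀₀, C₀₁],[C₁₀, C₁₁]] with C₁₁
invertible, dim ker C = n₀ iff C₀₁ C₁₁⁻¹ C₁₀ = C₀₀. -/
theorem stmt_7
    {K : Type*} [Field K] {n₀ n₁ : ℕ}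
    (C₀₀ : Matrix (Fin n₀) (Fin n₀) K) (C₀₁ : Matrix (Fin n₀) (Fin n₁) K)
    (C₁₀ : Matrix (Fin n₁) (Fin n₀) K) (C₁₁ : Matrix (Fin n₁) (Fin n₁) K)
    (hC₁₁ : IsUnit C₁₁.det) :
    Module.finrank K
      (LinearMap.ker (Matrix.fromBlocks C₀₀ C₀₁ C₁₀ C₁₁).mulVecLin) = n₀ ↔
    C₀₁ * C₁₁⁻¹ * C₁₀ = C₀₀ := by
  letI : Invertible C₁₁ := C₁₁.invertibleOfIsUnitDet hC₁₁
  letI : Invertible (1 : Matrix (Fin n₀) (Fin n₀) K) := invertibleOne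
  letI : Invertible (1 : Matrix (Fin n₁) (Fin n₁) K) := invertibleOne
  set S : Matrix (Fin n₀) (Fin n₀) K := C₀₀ - C₀₁ * ⅟C₁₁ * C₁₀ with hS
  set U : Matrix (Fin n₀ ⊕ Fin n₁) (Fin n₀ ⊕ Fin n₁) K :=
    Matrix.fromBlocks 1 (C₀₁ * ⅟C₁₁) 0 1 with hU
  set V : Matrix (Fin n₀ ⊕ Fin n₁) (Fin n₀ ⊕ Fin n₁) K :=
    Matrix.fromBlocks 1 0 (⅟C₁₁ * C₁₀) 1 with hV
  set M : Matrix (Fin n₀ ⊕ Fin n₁) (Fin n₀ ⊕ Fin n₁) K :=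
    Matrix.fromBlocks S 0 0 C₁₁ with hM
  have hfac : Matrix.fromBlocks C₀₀ C₀₁ C₁₀ C₁₁ = U * M * V :=
    Matrix.fromBlocks_eq_of_invertible₂₂ _ _ _ _
  letI hUi : Invertible U := Matrix.fromBlocksZero₂₁Invertible 1 (C₀₁ * ⅟C₁₁) 1
  letI hVi : Invertible V := Matrix.fromBlocksZero₁₂Invertible 1 (⅟C₁₁ * C₁₀) 1
  have key : Module.finrank K
      (LinearMap.ker (Matrix.fromBlocks C₀₀ C₀₁ C₁₀ C₁₁).mulVecLin) =
      Module.finrank K (LinearMap.ker S.mulVecLin) := by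
    rw [hfac, Matrix.mulVecLin_mul, Matrix.mulVecLin_mul, LinearMap.ker_comp,
      LinearMap.ker_comp, aux_ker_invertible U, Submodule.comap_bot]
    have hVeq : V.mulVecLin = (V.toLinearEquiv' hVi).toLinearMap := by
      ext x
      simp [Matrix.toLinearEquiv', Matrix.mulVecLin, Matrix.toLin'_apply]
    rw [hVeq, Submodule.comap_equiv_eq_map_symm (V.toLinearEquiv' hVi)
      (LinearMap.ker M.mulVecLin), LinearEquiv.finrank_map_eq]
    exact aux_finrank_ker_blockdiag S C₁₁
  rw [key]
  have hSiff : C₀₁ * C₁₁⁻¹ * C₁₀ = C₀₀ ↔ S = 0 := by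
    rw [hS, Matrix.invOf_eq_nonsing_inv, sub_eq_zero, eq_comm]
  rw [hSiff]
  constructor
  · intro h
    have htop : LinearMap.ker S.mulVecLin = ⊤ := by
      apply Submodule.eq_top_of_finrank_eq
      simpa [Module.finrank_fintype_fun_eq_card] using h
    have h0 : S.mulVecLin = 0 := LinearMap.ker_eq_top.mp htop
    ext i j
    have := congrFun (congrFun (congrArg DFunLike.coe h0) (Pi.single j 1)) i
    simpa [Matrix.mulVecLin, Matrix.mulVec_single] using this
  · intro h
    rw [h, Matrix.mulVecLin_zero, LinearMap.ker_zero, finrank_top]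
    simp [Module.finrank_fintype_fun_eq_card]
end

section
/- Let K be a field, V a K-vector space, H a subspace of V, and G a subgroup of GL(V) all of whose elements map H into H. Assume the center of G is trivial, and that there exist z ∈ G with z ≠ 1 and a scalar λ ∈ K such that z v − λ v ∈ H for all v ∈ V (z acts as the scalar λ on V/H). Then there exists g ∈ G with g ≠ 1 acting trivially on V/H, i.e., g v − v ∈ H for all v ∈ V. -/
/-- If G ≤ GL(V) stabilizes H, has trivial center, and contains a
nontrivial element z acting as a scalar λ on V/H, then G contains a nontrivial
element acting trivially on V/H. -/
theorem stmt_9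
    {K : Type*} [Field K]
    {V : Type*} [AddCommGroup V] [Module K V]
    (H : Submodule K V)
    (G : Subgroup (V ≃ₗ[K] V))
    (hstab : ∀ g ∈ G, ∀ x ∈ H, g x ∈ H)
    (hcenter : ∀ g ∈ G, (∀ g' ∈ G, g * g' = g' * g) → g = 1)
    (z : V ≃ₗ[K] V) (hzG : z ∈ G) (hz1 : z ≠ 1)
    (lam : K) (hz : ∀ v : V, z v - lam • v ∈ H) :
    ∃ g ∈ G, g ≠ 1 ∧ ∀ v : V, g v - v ∈ H := by
  by_cases hlam : lam = 0
  · refine ⟨z, hzG, hz1, fun v => ?_⟩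
    have h1 : z (z.symm v) ∈ H := by
      have := hz (z.symm v)
      simpa [hlam] using this
    rw [z.apply_symm_apply] at h1
    have h2 : z v ∈ H := by simpa [hlam] using hz v
    exact sub_mem h2 h1
  · have hnc : ¬ (∀ g' ∈ G, z * g' = g' * z) := fun h => hz1 (hcenter z hzG h)
    push_neg at hnc
    obtain ⟨g', hg'G, hne⟩ := hnc
    refine ⟨z * g' * z⁻¹ * g'⁻¹,
      G.mul_mem (G.mul_mem (G.mul_mem hzG hg'G) (G.inv_mem hzG)) (G.inv_mem hg'G),
      ?_, ?_⟩
    · intro h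
      apply hne
      have : z * g' * z⁻¹ * g'⁻¹ * g' * z = 1 * g' * z := by rw [h]
      group at this ⊢
      simpa using this
    · intro v
      set w := g'⁻¹ v with hw
      -- h1 : z⁻¹ w - lam⁻¹ • w ∈ H
      have hz' := hz (lam⁻¹ • w)
      rw [smul_smul, mul_inv_cancel₀ hlam, one_smul] at hz'
      have h1 : lam⁻¹ • w - z⁻¹ w ∈ H := by
        have := hstab _ (G.inv_mem hzG) _ hz'
        have heq : (z⁻¹ : V ≃ₗ[K] V) (z (lam⁻¹ • w) - w) = lam⁻¹ • w - z⁻¹ w := by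
          show z.symm _ = lam⁻¹ • w - z.symm w
          simp [map_sub]
        rwa [heq] at this
      -- apply g'
      have h2 : lam⁻¹ • g' w - g' (z⁻¹ w) ∈ H := by
        have := hstab _ hg'G _ h1
        have heq : g' (lam⁻¹ • w - z⁻¹ w) = lam⁻¹ • g' w - g' (z⁻¹ w) := by
          simp [map_sub, map_smul]
        rwa [heq] at this
      -- apply z
      have h3 : z (lam⁻¹ • g' w) - z (g' (z⁻¹ w)) ∈ H := by
        have := hstab _ hzG _ h2
        have heq : z (lam⁻¹ • g' w - g' (z⁻¹ w)) = z (lam⁻¹ • g' w) - z (g' (z⁻¹ w)) := by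
          simp [map_sub]
        rwa [heq] at this
      -- z (lam⁻¹ • g' w) - g' w ∈ H
      have h4 : z (lam⁻¹ • g' w) - g' w ∈ H := by
        have := hz (lam⁻¹ • g' w)
        rwa [smul_smul, mul_inv_cancel₀ hlam, one_smul] at this
      have h5 : z (g' (z⁻¹ w)) - g' w ∈ H := by
        have := sub_mem h4 h3
        have heq : z (lam⁻¹ • g' w) - g' w - (z (lam⁻¹ • g' w) - z (g' (z⁻¹ w)))
            = z (g' (z⁻¹ w)) - g' w := by abel
        rwa [heq] at this
      have hgw : g' w = v := by
        show g' (g'.symm v) = v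
        exact g'.apply_symm_apply v
      have hfinal : (z * g' * z⁻¹ * g'⁻¹) v = z (g' (z⁻¹ w)) := rfl
      rw [hfinal, ← hgw]
      exact h5
end

section
/- Let K be a field of characteristic 0 and α₁, α₂, α₄, l, m ∈ K with α₃ := lm. Consider the matrix C(III) = [[2, −α₁, −α₂, −α₄], [−1, 2, −l, 0], [−1, −m, 2, 0], [−1, 0, 0, 2]] and assume det C(III) = 0, α₄ ≠ 0, and α₃ ≠ 4. Then the leading 3 × 3 principal minor det [[2, −α₁, −α₂], [−1, 2, −l], [−1, −m, 2]] equals (1/2)·α₄·(4 − α₃), which is nonzero; consequently the kernel of C(III) is one-dimensional, spanned by the vector (1, (l+2)/(4−α₃), (m+2)/(4−α₃), 1/2). -/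
/-- If det C(III) = 0, α₄ ≠ 0 and α₃ := lm ≠ 4, then the leading
3 × 3 principal minor equals (1/2)·α₄·(4 − α₃) ≠ 0, and the kernel of C(III) is
one-dimensional, spanned by (1, (l+2)/(4−α₃), (m+2)/(4−α₃), 1/2). -/
theorem stmt_14
    {K : Type*} [Field K] [CharZero K] (α₁ α₂ α₄ l m : K)
    (hdet : (!![2, -α₁, -α₂, -α₄; -1, 2, -l, 0; -1, -m, 2, 0; -1, 0, 0, 2] :
        Matrix (Fin 4) (Fin 4) K).det = 0)
    (hα₄ : α₄ ≠ 0)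
    (hα₃ : l * m ≠ 4) :
    (!![2, -α₁, -α₂; -1, 2, -l; -1, -m, 2] : Matrix (Fin 3) (Fin 3) K).det =
      (1 / 2) * α₄ * (4 - l * m) ∧
    (1 / 2 : K) * α₄ * (4 - l * m) ≠ 0 ∧
    Module.finrank K (LinearMap.ker
      (!![2, -α₁, -α₂, -α₄; -1, 2, -l, 0; -1, -m, 2, 0; -1, 0, 0, 2] :
        Matrix (Fin 4) (Fin 4) K).mulVecLin) = 1 ∧
    LinearMap.ker
      (!![2, -α₁, -α₂, -α₄; -1, 2, -l, 0; -1, -m, 2, 0; -1, 0, 0, 2] :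
        Matrix (Fin 4) (Fin 4) K).mulVecLin =
      Submodule.span K
        {![1, (l + 2) / (4 - l * m), (m + 2) / (4 - l * m), (1 : K) / 2]} := by
  have hsub : (4 : K) - l * m ≠ 0 := sub_ne_zero.mpr (Ne.symm hα₃)
  -- expanded determinant relation
  have hd4 : 16 - 4 * (l * m) - 4 * α₁ - 2 * (α₁ * l) - 2 * (α₂ * m) - 4 * α₂
      - 4 * α₄ + α₄ * (l * m) = 0 := by
    rw [Matrix.det_succ_row_zero] at hdet
    simp [Fin.sum_univ_succ, Matrix.det_fin_three, Matrix.submatrix, Fin.succAbove] at hdet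
    linear_combination hdet
  set v : Fin 4 → K :=
    ![1, (l + 2) / (4 - l * m), (m + 2) / (4 - l * m), (1 : K) / 2] with hv
  set C : Matrix (Fin 4) (Fin 4) K :=
    !![2, -α₁, -α₂, -α₄; -1, 2, -l, 0; -1, -m, 2, 0; -1, 0, 0, 2] with hC
  have hker : LinearMap.ker C.mulVecLin = Submodule.span K {v} := by
    apply le_antisymm
    · intro x hx
      have hx0 : C.mulVec x = 0 := hx
      have h1 : -x 0 + (2 * x 1 - l * x 2) = 0 := by
        have := congrFun hx0 1
        simp [hC, Matrix.mulVec, dotProduct, Fin.sum_univ_four] at this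
        linear_combination this
      have h2 : -x 0 + (-(m * x 1) + 2 * x 2) = 0 := by
        have := congrFun hx0 2
        simp [hC, Matrix.mulVec, dotProduct, Fin.sum_univ_four] at this
        linear_combination this
      have h3 : -x 0 + 2 * x 3 = 0 := by
        have := congrFun hx0 3
        simp [hC, Matrix.mulVec, dotProduct, Fin.sum_univ_four] at this
        linear_combination this
      rw [Submodule.mem_span_singleton]
      refine ⟨x 0, ?_⟩
      funext i
      fin_cases i
      · simp [hv]
      · show x 0 * ((l + 2) / (4 - l * m)) = x 1
        field_simp
        linear_combination (-2 : K) * h1 - l * h2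
      · show x 0 * ((m + 2) / (4 - l * m)) = x 2
        rw [mul_div_assoc', div_eq_iff hsub]
        linear_combination -(m * h1) - (2 : K) * h2
      · show x 0 * (1 / 2) = x 3
        field_simp
        linear_combination -h3
    · rw [Submodule.span_le, Set.singleton_subset_iff]
      show C.mulVec v = 0
      funext i
      fin_cases i <;>
        simp [hC, hv, Matrix.mulVec, dotProduct, Fin.sum_univ_four]
      · field_simp
        linear_combination hd4
      · field_simp
        ring
      · have hsub' : (4 : K) - m * l ≠ 0 := by rwa [mul_comm m l]
        field_simp
        ring
  have hvne : v ≠ 0 := by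
    intro h
    have := congrFun h 0
    simp [hv] at this
  refine ⟨?_, ?_, ?_, hker⟩
  · rw [Matrix.det_fin_three]
    simp only [Matrix.of_apply, Matrix.cons_val', Matrix.cons_val_zero,
      Matrix.cons_val_one, Matrix.head_cons, Matrix.empty_val',
      Matrix.cons_val_fin_one, Matrix.head_fin_const, Matrix.cons_val_two,
      Matrix.tail_cons]
    linear_combination (1 / 2 : K) * hd4
  · intro h
    rcases mul_eq_zero.mp h with h | h
    · rcases mul_eq_zero.mp h with h | h
      · norm_num at h
      · exact hα₄ h
    · exact hsub h
  · rw [hker, finrank_span_singleton hvne]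
end

section
/- Let K be a field of characteristic 0, let α₁, α₃, α₄, l, m ∈ K be nonzero, and set α₂ := lm. For the matrix C(IV) = [[2, −α₁, 0, −α₄], [−1, 2, −l, 0], [0, −m, 2, −1], [−1, 0, −α₃, 2]], the kernel of C(IV) has dimension 2 if and only if α₂ = α₄ = 4 − α₁, α₃ = α₁, m = −1, and l = −α₂. In that case the kernel is spanned by the vectors b₁ = (1, 1/2, 0, 1/2) and b₃ = (0, −α₂/2, 1, α₁/2). -/
private lemma mem_ker_iff4 {K : Type*} [Field K]
    (a b c d e f g h i j k l2 m n o p : K) (x : Fin 4 → K) :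
    x ∈ LinearMap.ker (!![a,b,c,d;e,f,g,h;i,j,k,l2;m,n,o,p] :
        Matrix (Fin 4) (Fin 4) K).mulVecLin ↔
    (a*x 0 + b*x 1 + c*x 2 + d*x 3 = 0 ∧ e*x 0 + f*x 1 + g*x 2 + h*x 3 = 0 ∧
     i*x 0 + j*x 1 + k*x 2 + l2*x 3 = 0 ∧ m*x 0 + n*x 1 + o*x 2 + p*x 3 = 0) := by
  simp [LinearMap.mem_ker, Matrix.mulVecLin_apply, Matrix.mulVec, dotProduct,
    Fin.sum_univ_four, funext_iff, Fin.forall_fin_succ]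

/-- With α₂ := lm, the kernel of C(IV) has dimension 2 iff
α₂ = α₄ = 4 − α₁, α₃ = α₁, m = −1 and l = −α₂; in that case the kernel is
spanned by b₁ = (1, 1/2, 0, 1/2) and b₃ = (0, −α₂/2, 1, α₁/2). -/
theorem stmt_16
    {K : Type*} [Field K] [CharZero K] (α₁ α₃ α₄ l m : K)
    (hα₁ : α₁ ≠ 0) (hα₃ : α₃ ≠ 0) (hα₄ : α₄ ≠ 0) (hl : l ≠ 0) (hm : m ≠ 0) :
    (Module.finrank K (LinearMap.ker
        (!![2, -α₁, 0, -α₄; -1, 2, -l, 0; 0, -m, 2, -1; -1, 0, -α₃, 2] :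
          Matrix (Fin 4) (Fin 4) K).mulVecLin) = 2 ↔
      (l * m = 4 - α₁ ∧ α₄ = 4 - α₁ ∧ α₃ = α₁ ∧ m = -1 ∧ l = -(l * m))) ∧
    ((l * m = 4 - α₁ ∧ α₄ = 4 - α₁ ∧ α₃ = α₁ ∧ m = -1 ∧ l = -(l * m)) →
      LinearMap.ker
        (!![2, -α₁, 0, -α₄; -1, 2, -l, 0; 0, -m, 2, -1; -1, 0, -α₃, 2] :
          Matrix (Fin 4) (Fin 4) K).mulVecLin =
        Submodule.span K
          ({![1, (1 : K) / 2, 0, (1 : K) / 2],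
            ![0, -(l * m) / 2, 1, α₁ / 2]} : Set (Fin 4 → K))) := by
  have key : ∀ x : Fin 4 → K, x ∈ LinearMap.ker
      (!![2, -α₁, 0, -α₄; -1, 2, -l, 0; 0, -m, 2, -1; -1, 0, -α₃, 2] :
        Matrix (Fin 4) (Fin 4) K).mulVecLin ↔
      (x 0 = 2*x 1 - l*x 2 ∧ x 3 = 2*x 2 - m*x 1 ∧
       (4 - α₁ + α₄*m)*x 1 + (-2*(l+α₄))*x 2 = 0 ∧
       (-2*(1+m))*x 1 + (4+l-α₃)*x 2 = 0) := by
    intro x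
    rw [mem_ker_iff4]
    constructor
    · rintro ⟨h1, h2, h3, h4⟩
      refine ⟨by linear_combination -h2, by linear_combination -h3,
        by linear_combination h1 + 2*h2 - α₄*h3, by linear_combination h4 - h2 + 2*h3⟩
    · rintro ⟨h1, h2, h3, h4⟩
      refine ⟨by linear_combination 2*h1 - α₄*h2 + h3, by linear_combination -h1,
        by linear_combination -h2, by linear_combination -h1 + 2*h2 + h4⟩
  have hcond : (l * m = 4 - α₁ ∧ α₄ = 4 - α₁ ∧ α₃ = α₁ ∧ m = -1 ∧ l = -(l * m)) ↔
      (4 - α₁ + α₄*m = 0 ∧ -2*(l+α₄) = 0 ∧ -2*(1+m) = 0 ∧ 4+l-α₃ = 0) := by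
    constructor
    · rintro ⟨h1, h2, h3, h4, h5⟩
      subst h2 h3 h4
      exact ⟨by ring, by linear_combination 2*h1, by ring, by linear_combination -h1⟩
    · rintro ⟨h1, h2, h3, h4⟩
      have hm1 : m = -1 := by linear_combination (-1/2 : K)*h3
      subst hm1
      refine ⟨by linear_combination -h1 + (1/2)*h2, by linear_combination -h1,
        by linear_combination h1 - (1/2)*h2 - h4, rfl, by ring⟩
  have bound : ∀ e f : K, (e ≠ 0 ∨ f ≠ 0) →
      (∀ x ∈ LinearMap.ker
        (!![2, -α₁, 0, -α₄; -1, 2, -l, 0; 0, -m, 2, -1; -1, 0, -α₃, 2] :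
          Matrix (Fin 4) (Fin 4) K).mulVecLin, e * x 1 + f * x 2 = 0) →
      Module.finrank K (LinearMap.ker
        (!![2, -α₁, 0, -α₄; -1, 2, -l, 0; 0, -m, 2, -1; -1, 0, -α₃, 2] :
          Matrix (Fin 4) (Fin 4) K).mulVecLin) ≤ 1 := by
    intro e f hef hker
    rcases hef with he | hf
    · have hle : LinearMap.ker
          (!![2, -α₁, 0, -α₄; -1, 2, -l, 0; 0, -m, 2, -1; -1, 0, -α₃, 2] :
            Matrix (Fin 4) (Fin 4) K).mulVecLin ≤
          Submodule.span K ({![-2*f/e - l, -f/e, 1, 2 + m*f/e]} : Set (Fin 4 → K)) := by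
        intro x hx
        obtain ⟨h0, h3, -, -⟩ := (key x).1 hx
        have h12 := hker x hx
        refine Submodule.mem_span_singleton.2 ⟨x 2, ?_⟩
        funext i
        fin_cases i <;> simp
        · field_simp
          linear_combination -e*h0 - 2*h12
        · field_simp
          linear_combination -h12
        · field_simp
          linear_combination -e*h3 + m*h12
      exact le_trans (Submodule.finrank_mono hle) (by simpa using finrank_span_le_card ({![-2*f/e - l, -f/e, 1, 2 + m*f/e]} : Set (Fin 4 → K)))
    · have hle : LinearMap.ker
          (!![2, -α₁, 0, -α₄; -1, 2, -l, 0; 0, -m, 2, -1; -1, 0, -α₃, 2] :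
            Matrix (Fin 4) (Fin 4) K).mulVecLin ≤
          Submodule.span K ({![2 + l*e/f, 1, -e/f, -2*e/f - m]} : Set (Fin 4 → K)) := by
        intro x hx
        obtain ⟨h0, h3, -, -⟩ := (key x).1 hx
        have h12 := hker x hx
        refine Submodule.mem_span_singleton.2 ⟨x 1, ?_⟩
        funext i
        fin_cases i <;> simp
        · field_simp
          linear_combination -f*h0 + l*h12
        · field_simp
          linear_combination -h12
        · field_simp
          linear_combination -f*h3 - 2*h12
      exact le_trans (Submodule.finrank_mono hle) (by simpa using finrank_span_le_card ({![2 + l*e/f, 1, -e/f, -2*e/f - m]} : Set (Fin 4 → K)))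
  have hspan : (l * m = 4 - α₁ ∧ α₄ = 4 - α₁ ∧ α₃ = α₁ ∧ m = -1 ∧ l = -(l * m)) →
      LinearMap.ker
        (!![2, -α₁, 0, -α₄; -1, 2, -l, 0; 0, -m, 2, -1; -1, 0, -α₃, 2] :
          Matrix (Fin 4) (Fin 4) K).mulVecLin =
        Submodule.span K
          ({![1, (1 : K) / 2, 0, (1 : K) / 2],
            ![0, -(l * m) / 2, 1, α₁ / 2]} : Set (Fin 4 → K)) := by
    rintro ⟨h1, h2, h3, h4, h5⟩
    subst h2 h3 h4
    apply le_antisymm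
    · intro x hx
      obtain ⟨h0, h3, -, -⟩ := (key x).1 hx
      refine Submodule.mem_span_pair.2 ⟨x 0, x 2, ?_⟩
      funext i
      fin_cases i <;> simp
      · linear_combination (1/2)*h0
      · linear_combination (1/2)*h0 - h3 + (x 2/2)*h1
    · rw [Submodule.span_le]
      rintro v hv
      simp only [Set.mem_insert_iff, Set.mem_singleton_iff] at hv
      rcases hv with rfl | rfl
      · rw [SetLike.mem_coe, key]
        refine ⟨?_, ?_, ?_, ?_⟩ <;> simp only [Matrix.cons_val_zero, Matrix.cons_val_one, Matrix.cons_val_two, Matrix.cons_val_three, Matrix.head_cons, Matrix.tail_cons]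
        · ring
        · ring
        · ring
        · ring
      · rw [SetLike.mem_coe, key]
        refine ⟨?_, ?_, ?_, ?_⟩ <;> simp only [Matrix.cons_val_zero, Matrix.cons_val_one, Matrix.cons_val_two, Matrix.cons_val_three, Matrix.head_cons, Matrix.tail_cons]
        · ring
        · linear_combination (1/2)*h1
        · linear_combination 2*h1
        · linear_combination -h1
  refine ⟨⟨?_, ?_⟩, hspan⟩
  · intro h2dim
    rw [hcond]
    have p1 : 4 - α₁ + α₄*m = 0 ∧ -2*(l+α₄) = 0 := by
      by_contra hc'
      rw [not_and_or] at hc'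
      have hle := bound _ _ hc' (fun x hx => ((key x).1 hx).2.2.1)
      omega
    have p2 : -2*(1+m) = 0 ∧ 4+l-α₃ = 0 := by
      by_contra hc'
      rw [not_and_or] at hc'
      have hle := bound _ _ hc' (fun x hx => ((key x).1 hx).2.2.2)
      omega
    exact ⟨p1.1, p1.2, p2.1, p2.2⟩
  · intro hc
    rw [hspan hc]
    have hb1 : (![1, (1 : K) / 2, 0, (1 : K) / 2] : Fin 4 → K) ≠ 0 := by
      intro h
      have := congrFun h 0
      simp at this
    have hli : LinearIndependent K
        ![![1, (1 : K) / 2, 0, (1 : K) / 2], ![0, -(l * m) / 2, 1, α₁ / 2]] := by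
      rw [LinearIndependent.pair_iff' hb1]
      intro a ha
      have := congrFun ha 2
      simp at this
    have hrange : ({![1, (1 : K) / 2, 0, (1 : K) / 2],
        ![0, -(l * m) / 2, 1, α₁ / 2]} : Set (Fin 4 → K)) =
        Set.range ![![1, (1 : K) / 2, 0, (1 : K) / 2], ![0, -(l * m) / 2, 1, α₁ / 2]] := by
      ext y
      simp [Fin.exists_fin_two, or_comm, eq_comm]
    rw [hrange, finrank_span_eq_card hli]
    simp
end

section
/- Let K be a field of characteristic 0, α₁, α₂, α₃, l₁, m₁, l₂, m₂ ∈ K, and set α₄ := l₁m₁ and α₅ := l₂m₂. For the matrix C(V) = [[2, −α₁, −α₂, −α₃], [−1, 2, −l₁, 0], [−1, −m₁, 2, −l₂], [−1, 0, −m₂, 2]], the kernel of C(V) has dimension 2 if and only if α₁ + α₃ = 4, α₄ + α₅ = 4, α₁l₁ + α₃m₂ + 2α₂ = 0, and m₁ + l₂ + 2 = 0. In that case the kernel is spanned by the vectors b₁ = (1, 1/2, 0, 1/2) and b₃ = (0, l₁/2, 1, m₂/2). -/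
/-- Writing α₄ := l₁m₁ and α₅ := l₂m₂, the kernel of C(V) has
dimension 2 iff α₁ + α₃ = 4, α₄ + α₅ = 4, α₁l₁ + α₃m₂ + 2α₂ = 0 and
m₁ + l₂ + 2 = 0; in that case the kernel is spanned by b₁ = (1, 1/2, 0, 1/2)
and b₃ = (0, l₁/2, 1, m₂/2). -/
theorem stmt_18
    {K : Type*} [Field K] [CharZero K] (α₁ α₂ α₃ l₁ m₁ l₂ m₂ : K) :
    (Module.finrank K (LinearMap.ker
        (!![2, -α₁, -α₂, -α₃; -1, 2, -l₁, 0; -1, -m₁, 2, -l₂; -1, 0, -m₂, 2] :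
          Matrix (Fin 4) (Fin 4) K).mulVecLin) = 2 ↔
      (α₁ + α₃ = 4 ∧ l₁ * m₁ + l₂ * m₂ = 4 ∧
        α₁ * l₁ + α₃ * m₂ + 2 * α₂ = 0 ∧ m₁ + l₂ + 2 = 0)) ∧
    ((α₁ + α₃ = 4 ∧ l₁ * m₁ + l₂ * m₂ = 4 ∧
        α₁ * l₁ + α₃ * m₂ + 2 * α₂ = 0 ∧ m₁ + l₂ + 2 = 0) →
      LinearMap.ker
        (!![2, -α₁, -α₂, -α₃; -1, 2, -l₁, 0; -1, -m₁, 2, -l₂; -1, 0, -m₂, 2] :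
          Matrix (Fin 4) (Fin 4) K).mulVecLin =
        Submodule.span K
          ({![1, (1 : K) / 2, 0, (1 : K) / 2],
            ![0, l₁ / 2, 1, m₂ / 2]} : Set (Fin 4 → K))) := by
  set M : Matrix (Fin 4) (Fin 4) K :=
    !![2, -α₁, -α₂, -α₃; -1, 2, -l₁, 0; -1, -m₁, 2, -l₂; -1, 0, -m₂, 2] with hM
  set b₁ : Fin 4 → K := ![1, (1 : K) / 2, 0, (1 : K) / 2] with hb₁
  set b₃ : Fin 4 → K := ![0, l₁ / 2, 1, m₂ / 2] with hb₃
  -- the kernel is always contained in the span of b₁ and b₃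
  have hker_le : LinearMap.ker M.mulVecLin ≤
      Submodule.span K ({b₁, b₃} : Set (Fin 4 → K)) := by
    intro x hx
    rw [LinearMap.mem_ker, Matrix.mulVecLin_apply] at hx
    have h1 := congrFun hx 1
    have h3 := congrFun hx 3
    simp only [hM, Matrix.mulVec, dotProduct, Fin.sum_univ_four,
      Matrix.cons_val', Matrix.cons_val_zero, Matrix.cons_val_one,
      Matrix.head_cons, Matrix.cons_val_fin_one, Matrix.empty_val',
      Matrix.head_fin_const, Matrix.cons_val_two, Matrix.tail_cons,
      Matrix.cons_val_three, Pi.zero_apply, Matrix.of_apply,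
      neg_mul, one_mul, zero_mul, neg_zero, add_zero, zero_add] at h1 h3
    have hx_eq : x = x 0 • b₁ + x 2 • b₃ := by
      funext i
      fin_cases i <;>
        simp [hb₁, hb₃] <;> first | linear_combination h1 / 2 | linear_combination h3 / 2
    rw [hx_eq]
    exact Submodule.add_mem _
      (Submodule.smul_mem _ _ (Submodule.subset_span (Set.mem_insert _ _)))
      (Submodule.smul_mem _ _ (Submodule.subset_span (Set.mem_insert_of_mem _ rfl)))
  -- linear independence of b₁, b₃ and rank of their span
  have hli : LinearIndependent K ![b₁, b₃] := by
    rw [LinearIndependent.pair_iff]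
    intro s t h
    constructor
    · simpa [hb₁, hb₃] using congrFun h 0
    · simpa [hb₁, hb₃] using congrFun h 2
  have hset : Set.range ![b₁, b₃] = ({b₁, b₃} : Set (Fin 4 → K)) := by
    ext y
    simp [Fin.exists_fin_two]
    tauto
  have hrank : Module.finrank K (Submodule.span K ({b₁, b₃} : Set (Fin 4 → K))) = 2 := by
    rw [← hset]
    simpa using finrank_span_eq_card hli
  -- membership of b₁ and b₃ given the conditions
  have hmem : (α₁ + α₃ = 4 ∧ l₁ * m₁ + l₂ * m₂ = 4 ∧
      α₁ * l₁ + α₃ * m₂ + 2 * α₂ = 0 ∧ m₁ + l₂ + 2 = 0) →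
      b₁ ∈ LinearMap.ker M.mulVecLin ∧ b₃ ∈ LinearMap.ker M.mulVecLin := by
    rintro ⟨h₁, h₂, h₃, h₄⟩
    constructor <;>
    · rw [LinearMap.mem_ker, Matrix.mulVecLin_apply]
      funext i
      fin_cases i <;>
        simp [hM, hb₁, hb₃, Matrix.mulVec, dotProduct, Fin.sum_univ_four] <;>
        first
          | ring1
          | linear_combination -h₁ / 2
          | linear_combination -h₂ / 2
          | linear_combination -h₃ / 2
          | linear_combination -h₄ / 2
  -- main: conditions imply kernel equals the span
  have hmain : (α₁ + α₃ = 4 ∧ l₁ * m₁ + l₂ * m₂ = 4 ∧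
      α₁ * l₁ + α₃ * m₂ + 2 * α₂ = 0 ∧ m₁ + l₂ + 2 = 0) →
      LinearMap.ker M.mulVecLin = Submodule.span K ({b₁, b₃} : Set (Fin 4 → K)) := by
    intro h
    obtain ⟨hm1, hm3⟩ := hmem h
    refine le_antisymm hker_le (Submodule.span_le.mpr ?_)
    rintro y (rfl | rfl)
    · exact hm1
    · exact hm3
  refine ⟨⟨?_, fun h => by rw [hmain h]; exact hrank⟩, hmain⟩
  -- forward direction: finrank 2 implies the conditions
  intro hfr
  have heq : LinearMap.ker M.mulVecLin = Submodule.span K ({b₁, b₃} : Set (Fin 4 → K)) :=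
    Submodule.eq_of_le_of_finrank_le hker_le (by rw [hrank, hfr])
  have hm1 : b₁ ∈ LinearMap.ker M.mulVecLin := by
    rw [heq]; exact Submodule.subset_span (Set.mem_insert _ _)
  have hm3 : b₃ ∈ LinearMap.ker M.mulVecLin := by
    rw [heq]; exact Submodule.subset_span (Set.mem_insert_of_mem _ rfl)
  rw [LinearMap.mem_ker, Matrix.mulVecLin_apply] at hm1 hm3
  have e1 := congrFun hm1 0
  have e2 := congrFun hm1 2
  have e3 := congrFun hm3 0
  have e4 := congrFun hm3 2
  simp [hM, hb₁, hb₃, Matrix.mulVec, dotProduct, Fin.sum_univ_four] at e1 e2 e3 e4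
  refine ⟨by linear_combination -2 * e1, by linear_combination -2 * e4,
    by linear_combination -2 * e3, by linear_combination -2 * e2⟩
end
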